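/- For all points a, b, c ∈ ℝ², the closed triangle convexHull{a, b, c} is contained in the union D(a,b) ∪ D(b,c) of the two diametral disks on the sides ab and bc. -/

import Mathlib

open scoped RealInnerProductSpace

noncomputable section

/-- The Euclidean plane. -/
abbrev Pt := EuclideanSpace ℝ (Fin 2)

/-- The closed disk with diameter `ab`. -/
def diskD (a b : Pt) : Set Pt := Metric.closedBall (midpoint ℝ a b) (dist a b / 2)

/-- `a` and `b` are adjacent in the witness Gabriel graph with witness set `W`. -/
def gabrielEdge (W : Set Pt) (a b : Pt) : Prop := (diskD a b \ {a, b}) ∩ W = ∅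

/-- General position: no three points collinear, no four points concyclic. -/
def GenPos (S : Set Pt) : Prop :=
  (∀ a ∈ S, ∀ b ∈ S, ∀ c ∈ S, a ≠ b → a ≠ c → b ≠ c → ¬ Collinear ℝ ({a, b, c} : Set Pt)) ∧
  (∀ a ∈ S, ∀ b ∈ S, ∀ c ∈ S, ∀ d ∈ S, a ≠ b → a ≠ c → a ≠ d → b ≠ c → b ≠ d → c ≠ d →
    ¬ EuclideanGeometry.Cospherical ({a, b, c, d} : Set Pt))

/-- Planar determinant `u₁v₂ − u₂v₁`. -/
def det2 (u v : Pt) : ℝ := u 0 * v 1 - u 1 * v 0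

/-- Counterclockwise convex position. -/
def CCWConvexPos {m : ℕ} (q : Fin m → Pt) : Prop :=
  ∀ i j k : Fin m, i < j → j < k → 0 < det2 (q j - q i) (q k - q i)

/-- Cyclic successor in `Fin m`. -/
def cyclicSucc {m : ℕ} (hm : 0 < m) (i : Fin m) : Fin m :=
  ⟨((i : ℕ) + 1) % m, Nat.mod_lt _ hm⟩

lemma mem_diskD_iff {a b x : Pt} : x ∈ diskD a b ↔ ⟪x - a, x - b⟫ ≤ 0 := by
  have h1 : x - midpoint ℝ a b = (1/2 : ℝ) • ((x - a) + (x - b)) := by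
    rw [midpoint_eq_smul_add, (by norm_num : (⅟2 : ℝ) = 1/2)]
    module
  have h2 : a - b = (x - b) - (x - a) := by abel
  rw [diskD, Metric.mem_closedBall, dist_eq_norm, dist_eq_norm, h1, h2, norm_smul]
  have hu := norm_add_sq_real (x - a) (x - b)
  have hv := norm_sub_sq_real (x - b) (x - a)
  have hna := norm_nonneg ((x - a) + (x - b))
  have hnb := norm_nonneg ((x - b) - (x - a))
  have hc : ⟪x - b, x - a⟫ = ⟪x - a, x - b⟫ := real_inner_comm _ _
  constructor
  · intro h
    simp only [norm_div, Real.norm_eq_abs] at h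
    rw [(by norm_num : |(1:ℝ)|/|2| = 1/2)] at h
    nlinarith
  · intro h
    have : ‖(x - a) + (x - b)‖ ≤ ‖(x - b) - (x - a)‖ := by nlinarith
    simp only [Real.norm_eq_abs]
    rw [abs_of_nonneg (by norm_num : (0:ℝ) ≤ 1/2)]
    linarith

/-- The triangle `abc` is covered by the diametral disks on `ab` and `bc`. -/
theorem triangle_subset_two_disks (a b c : Pt) :
    convexHull ℝ ({a, b, c} : Set Pt) ⊆ diskD a b ∪ diskD b c := by
  intro x hx
  have hset : ({a, b, c} : Set Pt) = insert b {a, c} := by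
    rw [Set.insert_comm]
  rw [hset, convexHull_insert (Set.insert_nonempty a {c}), convexHull_pair] at hx
  rw [mem_convexJoin] at hx
  obtain ⟨w, hw, z, hz, hxz⟩ := hx
  rw [Set.mem_singleton_iff] at hw
  rw [hw] at hxz
  rw [segment_eq_image'] at hz
  obtain ⟨s, ⟨hs0, hs1⟩, rfl⟩ := hz
  set u := c - a with hu
  have hb1 : b ∈ diskD a b := mem_diskD_iff.mpr (by simp)
  have hb2 : b ∈ diskD b c := mem_diskD_iff.mpr (by simp)
  have hcab : Convex ℝ (diskD a b) := convex_closedBall _ _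
  have hcbc : Convex ℝ (diskD b c) := convex_closedBall _ _
  have e1 : (a + s • u) - a = s • u := by abel
  have e2 : (a + s • u) - c = (s - 1) • u := by
    rw [hu]; module
  have key1 : ⟪(a + s • u) - a, (a + s • u) - b⟫ =
      s * (s * ⟪u, u⟫ - ⟪u, b - a⟫) := by
    rw [e1]
    have e3 : (a + s • u) - b = s • u - (b - a) := by abel
    rw [e3]
    simp [inner_sub_right, real_inner_smul_left, real_inner_smul_right, norm_smul, mul_pow, Real.norm_eq_abs, sq_abs]
    ring
  have key2 : ⟪(a + s • u) - b, (a + s • u) - c⟫ =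
      (s - 1) * (s * ⟪u, u⟫ - ⟪u, b - a⟫) := by
    rw [e2]
    have e3 : (a + s • u) - b = s • u - (b - a) := by abel
    rw [e3]
    simp [inner_sub_left, real_inner_smul_left, real_inner_smul_right, real_inner_comm u (b-a)]
    rw [show ⟪u, b - a⟫ = ⟪b, u⟫ - ⟪a, u⟫ by rw [inner_sub_right u b a, real_inner_comm u b, real_inner_comm u a]]
    ring
  rcases le_total (s * ⟪u, u⟫) ⟪u, b - a⟫ with h | h
  · left
    have hz' : (a + s • u) ∈ diskD a b := by
      rw [mem_diskD_iff, key1]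
      exact mul_nonpos_of_nonneg_of_nonpos hs0 (by linarith)
    exact hcab.segment_subset hb1 hz' hxz
  · right
    have hz' : (a + s • u) ∈ diskD b c := by
      rw [mem_diskD_iff, key2]
      exact mul_nonpos_of_nonpos_of_nonneg (by linarith) (by linarith)
    exact hcbc.segment_subset hb2 hz' hxz
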